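/- Let f : I → [0,∞) be three times differentiable on the interior of interval I, a, b in the interior with a < b, f''' integrable on [a,b], and let q ≥ 1. Suppose |f'''|^q is log-convex on [a,b] and |f'''(a)|, |f'''(b)| are positive and distinct. Then |(1/(b-a))·∫_a^b f(x) dx − f((a+b)/2) − ((b-a)²/24)·f''((a+b)/2)| ≤ ((b-a)³/96)·(1/4)^{1−1/q}·[ |f'''(b)|·(μ_{K,q})^{1/q} + |f'''(a)|·(μ_{M,q})^{1/q} ], where for positive c ≠ 1, μ_{c,q} = 2·c^{q/2}·(q·ln c − 6)/(q·ln c)² + 48·c^{q/2}·(q·ln c − 2)/(q·ln c)⁴ + 96/(q·ln c)⁴, and K = |f'''(a)|/|f'''(b)|, M = |f'''(b)|/|f'''(a)|. -/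

import Mathlib

open MeasureTheory intervalIntegral

noncomputable def muq (c q : ℝ) : ℝ :=
  2 * c ^ (q / 2) * (q * Real.log c - 6) / (q * Real.log c) ^ 2
    + 48 * c ^ (q / 2) * (q * Real.log c - 2) / (q * Real.log c) ^ 4
    + 96 / (q * Real.log c) ^ 4

lemma comp_exp (c d lam : ℝ) (hcd : c < d) (hlam : lam ≠ 0) :
    ∫ t in ((c+d)/2)..d, (d - t)^3 * Real.exp (lam * (d - t) / (d - c)) =
      (d-c)^4 * (Real.exp (lam/2) * (1/(8*lam) - 3/(4*lam^2) + 3/lam^3 - 6/lam^4) + 6/lam^4) := by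
  have hh : d - c ≠ 0 := by linarith
  set h := d - c with hh'
  set F : ℝ → ℝ := fun t => -Real.exp (lam * (d - t) / h) *
    ((d-t)^3*h/lam - 3*(d-t)^2*h^2/lam^2 + 6*(d-t)*h^3/lam^3 - 6*h^4/lam^4) with hF
  have hder : ∀ t ∈ Set.uIcc ((c+d)/2) d, HasDerivAt F ((d - t)^3 * Real.exp (lam * (d - t) / h)) t := by
    intro t _
    have h1 : HasDerivAt (fun t : ℝ => lam * (d - t) / h) (-(lam/h)) t := by
      have : HasDerivAt (fun t : ℝ => lam * (d - t) / h) ((lam * (0 - 1))/h) t := by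
        exact (((hasDerivAt_const t d).sub (hasDerivAt_id t)).const_mul lam).div_const h
      convert this using 1; ring
    have h2 : HasDerivAt (fun t : ℝ => Real.exp (lam * (d - t) / h)) (Real.exp (lam * (d - t) / h) * (-(lam/h))) t := h1.exp
    have h3 : HasDerivAt (fun t : ℝ => (d-t)^3*h/lam - 3*(d-t)^2*h^2/lam^2 + 6*(d-t)*h^3/lam^3 - 6*h^4/lam^4)
        (-(3*(d-t)^2*h/lam) + 6*(d-t)*h^2/lam^2 - 6*h^3/lam^3) t := by
      have hd : HasDerivAt (fun t : ℝ => d - t) (-1) t := by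
        exact (hasDerivAt_id' t).const_sub d
      have p3 : HasDerivAt (fun t : ℝ => (d-t)^3) (3*(d-t)^2*(-1)) t := by
        exact (hd.fun_pow 3).congr_deriv (by norm_num)
      have p2 : HasDerivAt (fun t : ℝ => (d-t)^2) (2*(d-t)*(-1)) t := by
        exact (hd.fun_pow 2).congr_deriv (by norm_num)
      have := (((p3.mul_const h).div_const lam).fun_sub
        (((p2.const_mul 3).mul_const (h^2)).div_const (lam^2))).fun_add
        (((hd.const_mul 6).mul_const (h^3)).div_const (lam^3))
      have := this.sub_const (6*h^4/lam^4)
      exact this.congr_deriv (by ring)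
    have := (h2.neg.mul h3)
    have h4 := h2.fun_neg.fun_mul h3
    refine h4.congr_deriv ?_
    field_simp
    ring
  have hcont : ContinuousOn (fun t => (d - t)^3 * Real.exp (lam * (d - t) / h)) (Set.uIcc ((c+d)/2) d) := by
    fun_prop
  have := intervalIntegral.integral_eq_sub_of_hasDerivAt hder (hcont.intervalIntegrable)
  rw [this]
  have hd2 : d - (c+d)/2 = h/2 := by rw [hh']; ring
  rw [hF]
  simp only [hd2]
  rw [show lam * (d - d) / h = 0 by ring, show lam * (h/2)/h = lam/2 by field_simp]
  rw [Real.exp_zero]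
  field_simp
  ring

lemma comp_exp_lower (c d lam : ℝ) (hcd : c < d) (hlam : lam ≠ 0) :
    ∫ t in c..((c+d)/2), (t - c)^3 * Real.exp (lam * (t - c) / (d - c)) =
      (d-c)^4 * (Real.exp (lam/2) * (1/(8*lam) - 3/(4*lam^2) + 3/lam^3 - 6/lam^4) + 6/lam^4) := by
  have hh : d - c ≠ 0 := by linarith
  set h := d - c with hh'
  set F : ℝ → ℝ := fun t => Real.exp (lam * (t - c) / h) *
    ((t-c)^3*h/lam - 3*(t-c)^2*h^2/lam^2 + 6*(t-c)*h^3/lam^3 - 6*h^4/lam^4) with hF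
  have hder : ∀ t ∈ Set.uIcc c ((c+d)/2), HasDerivAt F ((t - c)^3 * Real.exp (lam * (t - c) / h)) t := by
    intro t _
    have h1 : HasDerivAt (fun t : ℝ => lam * (t - c) / h) (lam/h) t := by
      have : HasDerivAt (fun t : ℝ => lam * (t - c) / h) ((lam * (1 - 0))/h) t :=
        (((hasDerivAt_id t).sub (hasDerivAt_const t c)).const_mul lam).div_const h
      convert this using 1; ring
    have h2 : HasDerivAt (fun t : ℝ => Real.exp (lam * (t - c) / h)) (Real.exp (lam * (t - c) / h) * (lam/h)) t := h1.exp
    have hd : HasDerivAt (fun t : ℝ => t - c) 1 t := by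
      exact (hasDerivAt_id' t).sub_const c
    have p3 : HasDerivAt (fun t : ℝ => (t-c)^3) (3*(t-c)^2*1) t := (hd.fun_pow 3).congr_deriv (by norm_num)
    have p2 : HasDerivAt (fun t : ℝ => (t-c)^2) (2*(t-c)*1) t := (hd.fun_pow 2).congr_deriv (by norm_num)
    have h3 : HasDerivAt (fun t : ℝ => (t-c)^3*h/lam - 3*(t-c)^2*h^2/lam^2 + 6*(t-c)*h^3/lam^3 - 6*h^4/lam^4)
        (3*(t-c)^2*h/lam - 6*(t-c)*h^2/lam^2 + 6*h^3/lam^3) t := by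
      have := ((((p3.mul_const h).div_const lam).fun_sub
        (((p2.const_mul 3).mul_const (h^2)).div_const (lam^2))).fun_add
        (((hd.const_mul 6).mul_const (h^3)).div_const (lam^3))).sub_const (6*h^4/lam^4)
      exact this.congr_deriv (by ring)
    have h4 := h2.fun_mul h3
    refine h4.congr_deriv ?_
    field_simp
    ring
  have hcont : ContinuousOn (fun t => (t - c)^3 * Real.exp (lam * (t - c) / h)) (Set.uIcc c ((c+d)/2)) := by
    fun_prop
  rw [intervalIntegral.integral_eq_sub_of_hasDerivAt hder (hcont.intervalIntegrable)]
  have hd2 : (c+d)/2 - c = h/2 := by rw [hh']; ring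
  rw [hF]
  simp only [hd2]
  rw [show lam * (c - c) / h = 0 by ring, show lam * (h/2)/h = lam/2 by field_simp]
  rw [Real.exp_zero]
  field_simp
  ring

lemma log_ne (K : ℝ) (hK : 0 < K) (hKne : K ≠ 1) : Real.log K ≠ 0 := by
  intro h
  rcases Real.log_eq_zero.mp h with h1 | h1 | h1
  · linarith
  · exact hKne h1
  · linarith

lemma muq_eq_exp (K q : ℝ) (hK : 0 < K) (hKne : K ≠ 1) (hq : 0 < q) :
    muq K q = 16 * (Real.exp (q * Real.log K / 2) * (1/(8*(q*Real.log K)) - 3/(4*(q*Real.log K)^2)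
      + 3/(q*Real.log K)^3 - 6/(q*Real.log K)^4) + 6/(q*Real.log K)^4) := by
  have hlam : q * Real.log K ≠ 0 := mul_ne_zero (ne_of_gt hq) (log_ne K hK hKne)
  have hr : K ^ (q/2) = Real.exp (q * Real.log K / 2) := by
    rw [Real.rpow_def_of_pos hK]; ring_nf
  rw [muq, hr]
  field_simp
  ring

lemma comp_rpow_upper (c d K q : ℝ) (hcd : c < d) (hK : 0 < K) (hKne : K ≠ 1) (hq : 0 < q) :
    ∫ t in ((c+d)/2)..d, (d - t)^3 * K ^ (q * ((d - t)/(d - c))) = (d - c)^4/16 * muq K q := by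
  have hlam : q * Real.log K ≠ 0 := mul_ne_zero (ne_of_gt hq) (log_ne K hK hKne)
  have hcong : ∀ t, (d - t)^3 * K ^ (q * ((d - t)/(d - c))) =
      (d - t)^3 * Real.exp ((q * Real.log K) * (d - t) / (d - c)) := by
    intro t
    rw [Real.rpow_def_of_pos hK]
    ring_nf
  simp only [hcong]
  rw [comp_exp c d _ hcd hlam, muq_eq_exp K q hK hKne hq]
  ring

lemma comp_rpow_lower (c d K q : ℝ) (hcd : c < d) (hK : 0 < K) (hKne : K ≠ 1) (hq : 0 < q) :
    ∫ t in c..((c+d)/2), (t - c)^3 * K ^ (q * ((t - c)/(d - c))) = (d - c)^4/16 * muq K q := by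
  have hlam : q * Real.log K ≠ 0 := mul_ne_zero (ne_of_gt hq) (log_ne K hK hKne)
  have hcong : ∀ t, (t - c)^3 * K ^ (q * ((t - c)/(d - c))) =
      (t - c)^3 * Real.exp ((q * Real.log K) * (t - c) / (d - c)) := by
    intro t
    rw [Real.rpow_def_of_pos hK]
    ring_nf
  simp only [hcong]
  rw [comp_exp_lower c d _ hcd hlam, muq_eq_exp K q hK hKne hq]
  ring

lemma muq_nonneg (c d K q : ℝ) (hcd : c < d) (hK : 0 < K) (hKne : K ≠ 1) (hq : 0 < q) :
    0 ≤ muq K q := by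
  have h := comp_rpow_upper c d K q hcd hK hKne hq
  have hpos : 0 ≤ ∫ t in ((c+d)/2)..d, (d - t)^3 * K ^ (q * ((d - t)/(d - c))) := by
    apply intervalIntegral.integral_nonneg (by linarith)
    intro u hu
    have : 0 ≤ d - u := by simp [Set.mem_Icc] at hu; linarith [hu.2]
    positivity
  rw [h] at hpos
  nlinarith [pow_pos (show (0:ℝ) < d - c by linarith) 4]

lemma hoelder_step (w φ : ℝ → ℝ) (c d q C : ℝ) (hcd : c < d) (hq : 1 < q)
    (hw : Continuous w) (hwpos : ∀ t ∈ Set.Ioo c d, 0 < w t)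
    (hφ : AEStronglyMeasurable φ (volume.restrict (Set.Ioc c d)))
    (hφbd : ∀ t ∈ Set.Icc c d, |φ t| ≤ C) :
    ∫ t in c..d, w t * |φ t| ≤
      (∫ t in c..d, w t) ^ (1-1/q) * (∫ t in c..d, w t * |φ t| ^ q) ^ (1/q) := by
  have hq0 : (0:ℝ) < q := by linarith
  set p : ℝ := q/(q-1) with hp
  have hpq : p.HolderConjugate q := by
    exact ((Real.holderConjugate_iff_eq_conjExponent hq).mpr rfl).symm
  have hp0 : p ≠ 0 := hpq.ne_zero
  have h1p : 1/p = 1 - 1/q := by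
    rw [hp]; field_simp
  set μ : Measure ℝ := volume.restrict (Set.Ioo c d) with hμ
  haveI : IsFiniteMeasure μ := by
    constructor
    rw [hμ, Measure.restrict_apply_univ]
    exact measure_Ioo_lt_top
  have hφμ : AEStronglyMeasurable φ μ :=
    hφ.mono_measure (Measure.restrict_mono Set.Ioo_subset_Ioc_self le_rfl)
  set F : ℝ → ℝ := fun t => w t ^ (1/p : ℝ) with hF
  set G : ℝ → ℝ := fun t => w t ^ (1/q : ℝ) * |φ t| with hG
  have hmem : ∀ᵐ t ∂μ, t ∈ Set.Ioo c d := ae_restrict_mem measurableSet_Ioo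
  have hF0 : 0 ≤ᵐ[μ] F := by
    filter_upwards [hmem] with t ht
    exact Real.rpow_nonneg (hwpos t ht).le _
  have hG0 : 0 ≤ᵐ[μ] G := by
    filter_upwards [hmem] with t ht
    exact mul_nonneg (Real.rpow_nonneg (hwpos t ht).le _) (abs_nonneg _)
  obtain ⟨Cw, hCw⟩ := (isCompact_Icc (a := c) (b := d)).exists_bound_of_continuousOn hw.continuousOn
  have hC0 : 0 ≤ C := le_trans (abs_nonneg _) (hφbd c ⟨le_refl c, hcd.le⟩)
  have hFaesm : AEStronglyMeasurable F μ := by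
    apply Continuous.aestronglyMeasurable
    apply hw.rpow_const
    intro x
    exact Or.inr hpq.one_div_nonneg
  have habs : AEStronglyMeasurable (fun t => |φ t|) μ := by
    simpa [Real.norm_eq_abs] using hφμ.norm
  have hGaesm : AEStronglyMeasurable G μ := by
    apply AEStronglyMeasurable.mul _ habs
    apply Continuous.aestronglyMeasurable
    apply hw.rpow_const
    intro x; exact Or.inr hpq.symm.one_div_nonneg
  have hFmem : MemLp F (ENNReal.ofReal p) μ := by
    apply MemLp.of_bound hFaesm (Cw ^ (1/p : ℝ))
    filter_upwards [hmem] with t ht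
    rw [Real.norm_eq_abs, abs_of_nonneg (Real.rpow_nonneg (hwpos t ht).le _)]
    apply Real.rpow_le_rpow (hwpos t ht).le _ hpq.one_div_nonneg
    exact le_trans (le_abs_self _) (hCw t ⟨ht.1.le, ht.2.le⟩)
  have hGmem : MemLp G (ENNReal.ofReal q) μ := by
    apply MemLp.of_bound hGaesm (Cw ^ (1/q : ℝ) * C)
    filter_upwards [hmem] with t ht
    rw [Real.norm_eq_abs, abs_of_nonneg (mul_nonneg (Real.rpow_nonneg (hwpos t ht).le _) (abs_nonneg _))]
    have hCw0 : 0 ≤ Cw := le_trans (norm_nonneg _) (hCw c ⟨le_rfl, hcd.le⟩)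
    apply mul_le_mul _ (hφbd t ⟨ht.1.le, ht.2.le⟩) (abs_nonneg _) (Real.rpow_nonneg hCw0 _)
    apply Real.rpow_le_rpow (hwpos t ht).le _ hpq.symm.one_div_nonneg
    exact le_trans (le_abs_self _) (hCw t ⟨ht.1.le, ht.2.le⟩)
  have key := integral_mul_le_Lp_mul_Lq_of_nonneg hpq hF0 hG0 hFmem hGmem
  have e1 : ∫ t, F t * G t ∂μ = ∫ t in c..d, w t * |φ t| := by
    rw [intervalIntegral.integral_of_le hcd.le, integral_Ioc_eq_integral_Ioo]
    apply MeasureTheory.integral_congr_ae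
    filter_upwards [hmem] with t ht
    rw [hF, hG]
    simp only
    rw [← mul_assoc, ← Real.rpow_add (hwpos t ht)]
    rw [one_div, one_div, hpq.inv_add_inv_eq_one, Real.rpow_one]
  have e2 : ∫ t, F t ^ p ∂μ = ∫ t in c..d, w t := by
    rw [intervalIntegral.integral_of_le hcd.le, integral_Ioc_eq_integral_Ioo]
    apply MeasureTheory.integral_congr_ae
    filter_upwards [hmem] with t ht
    rw [hF]
    simp only
    rw [← Real.rpow_mul (hwpos t ht).le, one_div, inv_mul_cancel₀ hp0, Real.rpow_one]
  have e3 : ∫ t, G t ^ q ∂μ = ∫ t in c..d, w t * |φ t| ^ q := by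
    rw [intervalIntegral.integral_of_le hcd.le, integral_Ioc_eq_integral_Ioo]
    apply MeasureTheory.integral_congr_ae
    filter_upwards [hmem] with t ht
    rw [hG]
    simp only
    rw [Real.mul_rpow (Real.rpow_nonneg (hwpos t ht).le _) (abs_nonneg _)]
    rw [← Real.rpow_mul (hwpos t ht).le, one_div, inv_mul_cancel₀ (ne_of_gt hq0), Real.rpow_one]
  rw [e1, e2, e3, h1p] at key
  exact key

lemma int_w_upper (c d : ℝ) (hcd : c < d) :
    ∫ t in ((c+d)/2)..d, (d - t)^3 = (d - c)^4/64 := by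
  have hder : ∀ t ∈ Set.uIcc ((c+d)/2) d, HasDerivAt (fun t : ℝ => -(d-t)^4/4) ((d - t)^3) t := by
    intro t _
    have hd : HasDerivAt (fun t : ℝ => d - t) (-1) t := by
      exact (hasDerivAt_id' t).const_sub d
    have := ((hd.fun_pow 4).fun_neg).div_const 4
    refine this.congr_deriv ?_
    ring
  rw [intervalIntegral.integral_eq_sub_of_hasDerivAt hder
    ((by fun_prop : Continuous fun t : ℝ => (d - t)^3).intervalIntegrable _ _)]
  have : d - (c+d)/2 = (d-c)/2 := by ring
  simp only [this, sub_self]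
  ring

lemma int_w_lower (c d : ℝ) (hcd : c < d) :
    ∫ t in c..((c+d)/2), (t - c)^3 = (d - c)^4/64 := by
  have hder : ∀ t ∈ Set.uIcc c ((c+d)/2), HasDerivAt (fun t : ℝ => (t-c)^4/4) ((t - c)^3) t := by
    intro t _
    have hd : HasDerivAt (fun t : ℝ => t - c) 1 t := by
      exact (hasDerivAt_id' t).sub_const c
    have := (hd.fun_pow 4).div_const 4
    refine this.congr_deriv ?_
    ring
  rw [intervalIntegral.integral_eq_sub_of_hasDerivAt hder
    ((by fun_prop : Continuous fun t : ℝ => (t - c)^3).intervalIntegrable _ _)]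
  have : (c+d)/2 - c = (d-c)/2 := by ring
  simp only [this, sub_self]
  ring

lemma alg_combine (h B μv q : ℝ) (hh : 0 < h) (hB : 0 < B) (hμ : 0 ≤ μv) (hq : 1 < q) :
    (h^4/64) ^ (1-1/q) * (B^q * (h^4/16 * μv)) ^ (1/q)
      = h^4/16 * ((1:ℝ)/4) ^ (1-1/q) * (B * μv ^ (1/q)) := by
  have hx : (0:ℝ) < h^4/16 := by positivity
  have hq0 : q ≠ 0 := by linarith
  rw [show h^4/64 = (h^4/16) * (1/4) by ring]
  rw [Real.mul_rpow hx.le (by norm_num)]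
  rw [Real.mul_rpow (by positivity) (by positivity)]
  rw [Real.mul_rpow hx.le hμ]
  rw [← Real.rpow_mul hB.le, mul_one_div_cancel hq0, Real.rpow_one]
  have e : (h^4/16)^(1-1/q) * (h^4/16)^(1/q) = h^4/16 := by
    rw [← Real.rpow_add hx]
    norm_num
  linear_combination ((1/4 : ℝ)^(1-1/q) * B * μv^(1/q)) * e

lemma key_upper (φ : ℝ → ℝ) (c d A B q : ℝ) (hcd : c < d) (hq : 1 ≤ q)
    (hA : 0 < A) (hB : 0 < B) (hKne : A/B ≠ 1)
    (hφ : AEStronglyMeasurable φ (volume.restrict (Set.Ioc ((c+d)/2) d)))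
    (hbd : ∀ t ∈ Set.Icc ((c+d)/2) d, |φ t| ^ q ≤ B^q * ((A/B) ^ (q * ((d-t)/(d-c))))) :
    ∫ t in ((c+d)/2)..d, (d-t)^3 * |φ t| ≤
      (d-c)^4/16 * ((1:ℝ)/4) ^ (1-1/q) * (B * (muq (A/B) q) ^ (1/q)) := by
  have hq0 : (0:ℝ) < q := by linarith
  have hK : 0 < A/B := by positivity
  set m := (c+d)/2 with hm
  have hmd : m < d := by rw [hm]; linarith
  have comp := comp_rpow_upper c d (A/B) q hcd hK hKne hq0
  have hμ0 : 0 ≤ muq (A/B) q := muq_nonneg c d (A/B) q hcd hK hKne hq0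
  -- bound function is continuous (via exp form)
  have hcongK : ∀ t : ℝ, (A/B) ^ (q * ((d-t)/(d-c))) =
      Real.exp ((q * Real.log (A/B)) * (d - t) / (d - c)) := by
    intro t; rw [Real.rpow_def_of_pos hK]; ring_nf
  -- boundedness of |φ|^q and |φ|
  have hCb : ∀ t ∈ Set.Icc m d, |φ t| ^ q ≤ B^q * max ((A/B)^q) 1 := by
    intro t ht
    refine le_trans (hbd t ht) (mul_le_mul_of_nonneg_left ?_ (Real.rpow_nonneg hB.le q))
    rcases le_or_gt 1 (A/B) with h1 | h1
    · refine le_trans ?_ (le_max_left _ _)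
      apply Real.rpow_le_rpow_of_exponent_le h1
      have h2 : (d-t)/(d-c) ≤ 1 := by
        rw [div_le_one (by linarith)]
        have := ht.1; rw [hm] at this; linarith
      nlinarith [h2, hq0.le]
    · refine le_trans ?_ (le_max_right _ _)
      apply Real.rpow_le_one hK.le h1.le
      have h2 : 0 ≤ (d-t)/(d-c) := by
        apply div_nonneg _ (by linarith); linarith [ht.2]
      positivity
  have hφbd : ∀ t ∈ Set.Icc m d, |φ t| ≤ (B^q * max ((A/B)^q) 1) ^ (1/q) := by
    intro t ht
    have h1 := Real.rpow_le_rpow (Real.rpow_nonneg (abs_nonneg _) q) (hCb t ht) (by positivity : (0:ℝ) ≤ 1/q)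
    rwa [← Real.rpow_mul (abs_nonneg _), mul_one_div_cancel (ne_of_gt hq0), Real.rpow_one] at h1
  -- integrability of weighted q-power
  have haesm : AEStronglyMeasurable (fun t => (d-t)^3 * |φ t| ^ q)
      (volume.restrict (Set.Ioc m d)) := by
    apply AEStronglyMeasurable.mul
    · exact (Continuous.aestronglyMeasurable (by fun_prop))
    · exact (hφ.norm.aemeasurable.pow aemeasurable_const).aestronglyMeasurable
  have hint1 : IntervalIntegrable (fun t => (d-t)^3 * |φ t| ^ q) volume m d := by
    rw [intervalIntegrable_iff_integrableOn_Ioc_of_le hmd.le]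
    apply Integrable.mono' (integrable_const (|d-c|^3 * (B^q * max ((A/B)^q) 1))) haesm
    filter_upwards [ae_restrict_mem measurableSet_Ioc] with t ht
    rw [Real.norm_eq_abs, abs_mul]
    apply mul_le_mul _ _ (abs_nonneg _) (by positivity)
    · rw [abs_pow]
      apply pow_le_pow_left₀ (abs_nonneg _)
      rw [abs_le]
      have h0 : (0:ℝ) ≤ d - t := by linarith [ht.2]
      have h1 : d - t ≤ d - c := by
        have h2 := ht.1
        have h3 : m = (c+d)/2 := hm
        linarith
      have h2 : d - c ≤ |d - c| := le_abs_self _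
      have h3 : (0:ℝ) ≤ |d - c| := abs_nonneg _
      exact ⟨by linarith, by linarith⟩
    · rw [abs_of_nonneg (Real.rpow_nonneg (abs_nonneg _) q)]
      exact hCb t ⟨ht.1.le, ht.2⟩
  have hint2 : IntervalIntegrable (fun t => (d-t)^3 * (B^q * ((A/B) ^ (q * ((d-t)/(d-c)))))) volume m d := by
    apply Continuous.intervalIntegrable
    simp only [hcongK]
    fun_prop
  -- monotone step
  have hmono : ∫ t in m..d, (d-t)^3 * |φ t| ^ q ≤ B^q * ((d-c)^4/16 * muq (A/B) q) := by
    have h1 : ∫ t in m..d, (d-t)^3 * |φ t| ^ q ≤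
        ∫ t in m..d, (d-t)^3 * (B^q * ((A/B) ^ (q * ((d-t)/(d-c))))) := by
      apply intervalIntegral.integral_mono_on hmd.le hint1 hint2
      intro t ht
      apply mul_le_mul_of_nonneg_left (hbd t ht)
      have := ht.1; rw [hm] at this
      have : (0:ℝ) ≤ d - t := by linarith [ht.2]
      positivity
    have h2 : ∫ t in m..d, (d-t)^3 * (B^q * ((A/B) ^ (q * ((d-t)/(d-c)))))
        = B^q * ((d-c)^4/16 * muq (A/B) q) := by
      rw [← comp, ← intervalIntegral.integral_const_mul]
      apply intervalIntegral.integral_congr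
      intro t _
      simp only
      ring
    linarith
  rcases eq_or_lt_of_le hq with hq1 | hq1
  · -- q = 1
    subst hq1
    have e0 : (1:ℝ) - 1/1 = 0 := by norm_num
    have e1 : (1:ℝ)/1 = 1 := by norm_num
    rw [e0, e1, Real.rpow_zero]
    have heq : ∫ t in m..d, (d-t)^3 * |φ t| = ∫ t in m..d, (d-t)^3 * |φ t| ^ (1:ℝ) := by
      apply intervalIntegral.integral_congr
      intro t ht; simp [Real.rpow_one]
    calc ∫ t in m..d, (d-t)^3 * |φ t|
        = ∫ t in m..d, (d-t)^3 * |φ t| ^ (1:ℝ) := heq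
      _ ≤ B ^ (1:ℝ) * ((d-c)^4/16 * muq (A/B) 1) := hmono
      _ = (d-c)^4/16 * 1 * (B * muq (A/B) 1 ^ (1:ℝ)) := by
          rw [Real.rpow_one, Real.rpow_one]; ring
  · -- q > 1
    have hold := hoelder_step (fun t => (d-t)^3) φ m d q ((B^q * max ((A/B)^q) 1) ^ (1/q))
      hmd hq1 (by fun_prop)
      (by intro t ht; have h1 : t < d := ht.2; have h2 : m < t := ht.1
          have : (0:ℝ) < d - t := by linarith
          positivity)
      hφ hφbd
    have hw : ∫ t in m..d, (d-t)^3 = (d-c)^4/64 := int_w_upper c d hcd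
    have hw0 : (0:ℝ) ≤ (d-c)^4/64 := by positivity
    have hq2 : ∫ t in m..d, (d-t)^3 * |φ t| ^ q ≥ 0 := by
      apply intervalIntegral.integral_nonneg hmd.le
      intro t ht
      have : (0:ℝ) ≤ d - t := by linarith [ht.2]
      positivity
    calc ∫ t in m..d, (d-t)^3 * |φ t|
        ≤ (∫ t in m..d, (d-t)^3) ^ (1-1/q) * (∫ t in m..d, (d-t)^3 * |φ t| ^ q) ^ (1/q) := hold
      _ ≤ ((d-c)^4/64) ^ (1-1/q) * (B^q * ((d-c)^4/16 * muq (A/B) q)) ^ (1/q) := by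
          rw [hw]
          apply mul_le_mul_of_nonneg_left _ (Real.rpow_nonneg hw0 _)
          exact Real.rpow_le_rpow hq2 hmono (by positivity)
      _ = (d-c)^4/16 * ((1:ℝ)/4) ^ (1-1/q) * (B * (muq (A/B) q) ^ (1/q)) :=
          alg_combine (d-c) B (muq (A/B) q) q (by linarith) hB hμ0 hq1


lemma key_lower (φ : ℝ → ℝ) (c d A B q : ℝ) (hcd : c < d) (hq : 1 ≤ q)
    (hA : 0 < A) (hB : 0 < B) (hKne : A/B ≠ 1)
    (hφ : AEStronglyMeasurable φ (volume.restrict (Set.Ioc c ((c+d)/2))))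
    (hbd : ∀ t ∈ Set.Icc c ((c+d)/2), |φ t| ^ q ≤ B^q * ((A/B) ^ (q * ((t-c)/(d-c))))) :
    ∫ t in c..((c+d)/2), (t-c)^3 * |φ t| ≤
      (d-c)^4/16 * ((1:ℝ)/4) ^ (1-1/q) * (B * (muq (A/B) q) ^ (1/q)) := by
  have hq0 : (0:ℝ) < q := by linarith
  have hK : 0 < A/B := by positivity
  set m := (c+d)/2 with hm
  have hmd : c < m := by rw [hm]; linarith
  have comp := comp_rpow_lower c d (A/B) q hcd hK hKne hq0
  have hmu0 : 0 ≤ muq (A/B) q := muq_nonneg c d (A/B) q hcd hK hKne hq0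
  have hcongK : ∀ t : ℝ, (A/B) ^ (q * ((t-c)/(d-c))) =
      Real.exp ((q * Real.log (A/B)) * (t - c) / (d - c)) := by
    intro t; rw [Real.rpow_def_of_pos hK]; ring_nf
  have hCb : ∀ t ∈ Set.Icc c m, |φ t| ^ q ≤ B^q * max ((A/B)^q) 1 := by
    intro t ht
    refine le_trans (hbd t ht) (mul_le_mul_of_nonneg_left ?_ (Real.rpow_nonneg hB.le q))
    rcases le_or_gt 1 (A/B) with h1 | h1
    · refine le_trans ?_ (le_max_left _ _)
      apply Real.rpow_le_rpow_of_exponent_le h1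
      have h2 : (t-c)/(d-c) ≤ 1 := by
        rw [div_le_one (by linarith)]
        have h3 := ht.2
        have h4 : m = (c+d)/2 := hm
        linarith
      nlinarith [h2, hq0.le]
    · refine le_trans ?_ (le_max_right _ _)
      apply Real.rpow_le_one hK.le h1.le
      have h2 : 0 ≤ (t-c)/(d-c) := by
        apply div_nonneg _ (by linarith); linarith [ht.1]
      positivity
  have hφbd : ∀ t ∈ Set.Icc c m, |φ t| ≤ (B^q * max ((A/B)^q) 1) ^ (1/q) := by
    intro t ht
    have h1 := Real.rpow_le_rpow (Real.rpow_nonneg (abs_nonneg _) q) (hCb t ht) (by positivity : (0:ℝ) ≤ 1/q)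
    rwa [← Real.rpow_mul (abs_nonneg _), mul_one_div_cancel (ne_of_gt hq0), Real.rpow_one] at h1
  have haesm : AEStronglyMeasurable (fun t => (t-c)^3 * |φ t| ^ q)
      (volume.restrict (Set.Ioc c m)) := by
    apply AEStronglyMeasurable.mul
    · exact (Continuous.aestronglyMeasurable (by fun_prop))
    · exact (hφ.norm.aemeasurable.pow aemeasurable_const).aestronglyMeasurable
  have hint1 : IntervalIntegrable (fun t => (t-c)^3 * |φ t| ^ q) volume c m := by
    rw [intervalIntegrable_iff_integrableOn_Ioc_of_le hmd.le]
    apply Integrable.mono' (integrable_const (|d-c|^3 * (B^q * max ((A/B)^q) 1))) haesm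
    filter_upwards [ae_restrict_mem measurableSet_Ioc] with t ht
    rw [Real.norm_eq_abs, abs_mul]
    apply mul_le_mul _ _ (abs_nonneg _) (by positivity)
    · rw [abs_pow]
      apply pow_le_pow_left₀ (abs_nonneg _)
      rw [abs_le]
      have h0 : (0:ℝ) ≤ t - c := by linarith [ht.1]
      have h1 : t - c ≤ d - c := by
        have h2 := ht.2
        have h3 : m = (c+d)/2 := hm
        linarith
      have h2 : d - c ≤ |d - c| := le_abs_self _
      have h3 : (0:ℝ) ≤ |d - c| := abs_nonneg _
      exact ⟨by linarith, by linarith⟩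
    · rw [abs_of_nonneg (Real.rpow_nonneg (abs_nonneg _) q)]
      exact hCb t ⟨ht.1.le, ht.2⟩
  have hint2 : IntervalIntegrable (fun t => (t-c)^3 * (B^q * ((A/B) ^ (q * ((t-c)/(d-c)))))) volume c m := by
    apply Continuous.intervalIntegrable
    simp only [hcongK]
    fun_prop
  have hmono : ∫ t in c..m, (t-c)^3 * |φ t| ^ q ≤ B^q * ((d-c)^4/16 * muq (A/B) q) := by
    have h1 : ∫ t in c..m, (t-c)^3 * |φ t| ^ q ≤
        ∫ t in c..m, (t-c)^3 * (B^q * ((A/B) ^ (q * ((t-c)/(d-c))))) := by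
      apply intervalIntegral.integral_mono_on hmd.le hint1 hint2
      intro t ht
      apply mul_le_mul_of_nonneg_left (hbd t ht)
      have h0 : (0:ℝ) ≤ t - c := by linarith [ht.1]
      positivity
    have h2 : ∫ t in c..m, (t-c)^3 * (B^q * ((A/B) ^ (q * ((t-c)/(d-c)))))
        = B^q * ((d-c)^4/16 * muq (A/B) q) := by
      rw [← comp, ← intervalIntegral.integral_const_mul]
      apply intervalIntegral.integral_congr
      intro t _
      simp only
      ring
    linarith
  rcases eq_or_lt_of_le hq with hq1 | hq1
  · subst hq1
    have e0 : (1:ℝ) - 1/1 = 0 := by norm_num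
    have e1 : (1:ℝ)/1 = 1 := by norm_num
    rw [e0, e1, Real.rpow_zero]
    have heq : ∫ t in c..m, (t-c)^3 * |φ t| = ∫ t in c..m, (t-c)^3 * |φ t| ^ (1:ℝ) := by
      apply intervalIntegral.integral_congr
      intro t ht; simp [Real.rpow_one]
    calc ∫ t in c..m, (t-c)^3 * |φ t|
        = ∫ t in c..m, (t-c)^3 * |φ t| ^ (1:ℝ) := heq
      _ ≤ B ^ (1:ℝ) * ((d-c)^4/16 * muq (A/B) 1) := hmono
      _ = (d-c)^4/16 * 1 * (B * muq (A/B) 1 ^ (1:ℝ)) := by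
          rw [Real.rpow_one, Real.rpow_one]; ring
  · have hold := hoelder_step (fun t => (t-c)^3) φ c m q ((B^q * max ((A/B)^q) 1) ^ (1/q))
      hmd hq1 (by fun_prop)
      (by intro t ht; have h1 : c < t := ht.1
          have : (0:ℝ) < t - c := by linarith
          positivity)
      hφ hφbd
    have hw : ∫ t in c..m, (t-c)^3 = (d-c)^4/64 := int_w_lower c d hcd
    have hw0 : (0:ℝ) ≤ (d-c)^4/64 := by positivity
    have hq2 : ∫ t in c..m, (t-c)^3 * |φ t| ^ q ≥ 0 := by
      apply intervalIntegral.integral_nonneg hmd.le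
      intro t ht
      have : (0:ℝ) ≤ t - c := by linarith [ht.1]
      positivity
    calc ∫ t in c..m, (t-c)^3 * |φ t|
        ≤ (∫ t in c..m, (t-c)^3) ^ (1-1/q) * (∫ t in c..m, (t-c)^3 * |φ t| ^ q) ^ (1/q) := hold
      _ ≤ ((d-c)^4/64) ^ (1-1/q) * (B^q * ((d-c)^4/16 * muq (A/B) q)) ^ (1/q) := by
          rw [hw]
          apply mul_le_mul_of_nonneg_left _ (Real.rpow_nonneg hw0 _)
          exact Real.rpow_le_rpow hq2 hmono (by positivity)
      _ = (d-c)^4/16 * ((1:ℝ)/4) ^ (1-1/q) * (B * (muq (A/B) q) ^ (1/q)) :=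
          alg_combine (d-c) B (muq (A/B) q) q (by linarith) hB hmu0 hq1

lemma ibp_upper (g g' g'' g''' : ℝ → ℝ) (m b : ℝ) (hmb : m ≤ b)
    (h1 : ∀ x ∈ Set.uIcc m b, HasDerivAt g (g' x) x)
    (h2 : ∀ x ∈ Set.uIcc m b, HasDerivAt g' (g'' x) x)
    (h3 : ∀ x ∈ Set.uIcc m b, HasDerivAt g'' (g''' x) x)
    (hint : IntervalIntegrable g''' volume m b) :
    ∫ t in m..b, (b-t)^3/6 * g''' t
      = (∫ x in m..b, g x) - (b-m) * g m - (b-m)^2/2 * g' m - (b-m)^3/6 * g'' m := by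
  have hd : ∀ x : ℝ, HasDerivAt (fun t : ℝ => b - t) (-1) x := fun x => by
    exact (hasDerivAt_id' x).const_sub b
  have hu3 : ∀ x ∈ Set.uIcc m b, HasDerivAt (fun t : ℝ => (b-t)^3/6) (-(b-x)^2/2) x := by
    intro x _
    have := ((hd x).fun_pow 3).div_const 6
    exact this.congr_deriv (by ring)
  have hu2 : ∀ x ∈ Set.uIcc m b, HasDerivAt (fun t : ℝ => (b-t)^2/2) (-(b-x)) x := by
    intro x _
    have := ((hd x).fun_pow 2).div_const 2
    exact this.congr_deriv (by ring)
  have hu1 : ∀ x ∈ Set.uIcc m b, HasDerivAt (fun t : ℝ => b - t) (-1 : ℝ) x := fun x _ => hd x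
  have hcg : ContinuousOn g (Set.uIcc m b) := fun x hx => (h1 x hx).continuousAt.continuousWithinAt
  have hcg' : ContinuousOn g' (Set.uIcc m b) := fun x hx => (h2 x hx).continuousAt.continuousWithinAt
  have hcg'' : ContinuousOn g'' (Set.uIcc m b) := fun x hx => (h3 x hx).continuousAt.continuousWithinAt
  have e3 := intervalIntegral.integral_mul_deriv_eq_deriv_mul hu3 h3
    (((by fun_prop : Continuous fun x : ℝ => -(b-x)^2/2)).intervalIntegrable _ _) hint
  have e2 := intervalIntegral.integral_mul_deriv_eq_deriv_mul hu2 h2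
    (((by fun_prop : Continuous fun x : ℝ => -(b-x))).intervalIntegrable _ _)
    (hcg''.intervalIntegrable)
  have e1 := intervalIntegral.integral_mul_deriv_eq_deriv_mul hu1 h1
    (((by fun_prop : Continuous fun _ : ℝ => (-1:ℝ))).intervalIntegrable _ _)
    (hcg'.intervalIntegrable)
  have n3 : ∫ x in m..b, (-(b-x)^2/2) * g'' x = -∫ x in m..b, (b-x)^2/2 * g'' x := by
    rw [show (fun x => (-(b-x)^2/2) * g'' x) = fun x => -((b-x)^2/2 * g'' x) by funext x; ring,
      intervalIntegral.integral_neg]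
  have n2 : ∫ x in m..b, (-(b-x)) * g' x = -∫ x in m..b, (b-x) * g' x := by
    rw [show (fun x => (-(b-x)) * g' x) = fun x => -((b-x) * g' x) by funext x; ring,
      intervalIntegral.integral_neg]
  have n1 : ∫ x in m..b, (-1 : ℝ) * g x = -∫ x in m..b, g x := by
    rw [show (fun x => (-1:ℝ) * g x) = fun x => -(g x) by funext x; ring,
      intervalIntegral.integral_neg]
  rw [n3] at e3
  rw [n2] at e2
  rw [n1] at e1
  simp only [sub_self] at e3 e2 e1
  rw [e3, e2, e1]
  ring

lemma ibp_lower (g g' g'' g''' : ℝ → ℝ) (a m : ℝ) (ham : a ≤ m)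
    (h1 : ∀ x ∈ Set.uIcc a m, HasDerivAt g (g' x) x)
    (h2 : ∀ x ∈ Set.uIcc a m, HasDerivAt g' (g'' x) x)
    (h3 : ∀ x ∈ Set.uIcc a m, HasDerivAt g'' (g''' x) x)
    (hint : IntervalIntegrable g''' volume a m) :
    ∫ t in a..m, (t-a)^3/6 * g''' t
      = (m-a)^3/6 * g'' m - (m-a)^2/2 * g' m + (m-a) * g m - ∫ x in a..m, g x := by
  have hd : ∀ x : ℝ, HasDerivAt (fun t : ℝ => t - a) (1:ℝ) x := fun x => by
    exact (hasDerivAt_id' x).sub_const a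
  have hu3 : ∀ x ∈ Set.uIcc a m, HasDerivAt (fun t : ℝ => (t-a)^3/6) ((x-a)^2/2) x := by
    intro x _
    have := ((hd x).fun_pow 3).div_const 6
    exact this.congr_deriv (by ring)
  have hu2 : ∀ x ∈ Set.uIcc a m, HasDerivAt (fun t : ℝ => (t-a)^2/2) (x-a) x := by
    intro x _
    have := ((hd x).fun_pow 2).div_const 2
    exact this.congr_deriv (by ring)
  have hu1 : ∀ x ∈ Set.uIcc a m, HasDerivAt (fun t : ℝ => t - a) (1 : ℝ) x := fun x _ => hd x
  have hcg : ContinuousOn g (Set.uIcc a m) := fun x hx => (h1 x hx).continuousAt.continuousWithinAt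
  have hcg' : ContinuousOn g' (Set.uIcc a m) := fun x hx => (h2 x hx).continuousAt.continuousWithinAt
  have hcg'' : ContinuousOn g'' (Set.uIcc a m) := fun x hx => (h3 x hx).continuousAt.continuousWithinAt
  have e3 := intervalIntegral.integral_mul_deriv_eq_deriv_mul hu3 h3
    (((by fun_prop : Continuous fun x : ℝ => (x-a)^2/2)).intervalIntegrable _ _) hint
  have e2 := intervalIntegral.integral_mul_deriv_eq_deriv_mul hu2 h2
    (((by fun_prop : Continuous fun x : ℝ => x - a)).intervalIntegrable _ _)
    (hcg''.intervalIntegrable)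
  have e1 := intervalIntegral.integral_mul_deriv_eq_deriv_mul hu1 h1
    (((by fun_prop : Continuous fun _ : ℝ => (1:ℝ))).intervalIntegrable _ _)
    (hcg'.intervalIntegrable)
  have n1 : ∫ x in a..m, (1 : ℝ) * g x = ∫ x in a..m, g x := by
    congr 1; funext x; ring
  rw [n1] at e1
  simp only [sub_self] at e3 e2 e1
  rw [e3, e2, e1]
  ring

lemma rpow_convex_form (A B q α : ℝ) (hA : 0 < A) (hB : 0 < B) :
    (A^q)^α * (B^q)^(1-α) = B^q * (A/B)^(q*α) := by
  rw [← Real.rpow_mul hA.le, ← Real.rpow_mul hB.le, Real.div_rpow hA.le hB.le,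
    show q*(1-α) = q - q*α by ring, Real.rpow_sub hB]
  have h1 : B ^ (q*α) ≠ 0 := by positivity
  field_simp

theorem thm_2_3
    (I : Set ℝ) (hI : I.OrdConnected)
    (f f' f'' f''' : ℝ → ℝ)
    (hfpos : ∀ x ∈ I, 0 ≤ f x)
    (a b : ℝ) (ha : a ∈ interior I) (hb : b ∈ interior I) (hab : a < b)
    (hf' : ∀ x ∈ interior I, HasDerivAt f (f' x) x)
    (hf'' : ∀ x ∈ interior I, HasDerivAt f' (f'' x) x)
    (hf''' : ∀ x ∈ interior I, HasDerivAt f'' (f''' x) x)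
    (hint : IntegrableOn f''' (Set.Icc a b))
    (q : ℝ) (hq : 1 ≤ q)
    (hlog : ∀ x ∈ Set.Icc a b, ∀ y ∈ Set.Icc a b, ∀ α ∈ Set.Icc (0:ℝ) 1,
      |f''' (α * x + (1 - α) * y)| ^ q ≤ (|f''' x| ^ q) ^ α * (|f''' y| ^ q) ^ (1 - α))
    (hA : 0 < |f''' a|) (hB : 0 < |f''' b|) (hne : |f''' a| ≠ |f''' b|) :
    |(1 / (b - a)) * ∫ x in a..b, f x - f ((a + b) / 2)
        - ((b - a) ^ 2 / 24) * f'' ((a + b) / 2)|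
    ≤ ((b - a) ^ 3 / 96) * ((1:ℝ) / 4) ^ (1 - 1 / q) *
        (|f''' b| * (muq (|f''' a| / |f''' b|) q) ^ (1 / q)
          + |f''' a| * (muq (|f''' b| / |f''' a|) q) ^ (1 / q)) := by
  have hba : (0:ℝ) < b - a := by linarith
  -- Icc a b ⊆ interior I
  have hsub : Set.Icc a b ⊆ interior I := by
    obtain ⟨ε₁, hε₁, h1⟩ := Metric.isOpen_iff.mp isOpen_interior a ha
    obtain ⟨ε₂, hε₂, h2⟩ := Metric.isOpen_iff.mp isOpen_interior b hb
    have ha' : a - ε₁/2 ∈ I := by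
      apply interior_subset
      apply h1
      rw [Metric.mem_ball, Real.dist_eq, show a - ε₁/2 - a = -(ε₁/2) by ring, abs_neg,
        abs_of_pos (by linarith)]
      linarith
    have hb' : b + ε₂/2 ∈ I := by
      apply interior_subset
      apply h2
      rw [Metric.mem_ball, Real.dist_eq, show b + ε₂/2 - b = ε₂/2 by ring,
        abs_of_pos (by linarith)]
      linarith
    have hIcc : Set.Icc (a - ε₁/2) (b + ε₂/2) ⊆ I := hI.out ha' hb'
    have hIoo : Set.Ioo (a - ε₁/2) (b + ε₂/2) ⊆ interior I :=
      interior_maximal (fun x hx => hIcc ⟨hx.1.le, hx.2.le⟩) isOpen_Ioo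
    intro x hx
    exact hIoo ⟨by linarith [hx.1], by linarith [hx.2]⟩
  have ham : a ≤ (a+b)/2 := by linarith
  have hmb : (a+b)/2 ≤ b := by linarith
  have husub : Set.uIcc ((a+b)/2) b ⊆ interior I := by
    rw [Set.uIcc_of_le hmb]
    exact fun x hx => hsub ⟨le_trans ham hx.1, hx.2⟩
  have hlsub : Set.uIcc a ((a+b)/2) ⊆ interior I := by
    rw [Set.uIcc_of_le ham]
    exact fun x hx => hsub ⟨hx.1, le_trans hx.2 hmb⟩
  have hi_mb : IntervalIntegrable f''' volume ((a+b)/2) b := by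
    rw [intervalIntegrable_iff_integrableOn_Ioc_of_le hmb]
    exact hint.mono_set (fun x hx => ⟨le_trans ham hx.1.le, hx.2⟩)
  have hi_am : IntervalIntegrable f''' volume a ((a+b)/2) := by
    rw [intervalIntegrable_iff_integrableOn_Ioc_of_le ham]
    exact hint.mono_set (fun x hx => ⟨hx.1.le, le_trans hx.2 hmb⟩)
  have S3 := ibp_upper f f' f'' f''' ((a+b)/2) b hmb
    (fun x hx => hf' x (husub hx)) (fun x hx => hf'' x (husub hx))
    (fun x hx => hf''' x (husub hx)) hi_mb
  have T3 := ibp_lower f f' f'' f''' a ((a+b)/2) ham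
    (fun x hx => hf' x (hlsub hx)) (fun x hx => hf'' x (hlsub hx))
    (fun x hx => hf''' x (hlsub hx)) hi_am
  have hif1 : IntervalIntegrable f volume a ((a+b)/2) := by
    apply ContinuousOn.intervalIntegrable
    exact fun x hx => (hf' x (hlsub hx)).continuousAt.continuousWithinAt
  have hif2 : IntervalIntegrable f volume ((a+b)/2) b := by
    apply ContinuousOn.intervalIntegrable
    exact fun x hx => (hf' x (husub hx)).continuousAt.continuousWithinAt
  have hsplit : (∫ x in a..(a+b)/2, f x) + ∫ x in ((a+b)/2)..b, f x = ∫ x in a..b, f x :=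
    intervalIntegral.integral_add_adjacent_intervals hif1 hif2
  have hE : (∫ x in a..b, f x) - (b-a) * f ((a+b)/2) - (b-a)^3/24 * f'' ((a+b)/2)
      = (∫ t in ((a+b)/2)..b, (b-t)^3/6 * f''' t) - ∫ t in a..(a+b)/2, (t-a)^3/6 * f''' t := by
    rw [S3, T3, ← hsplit]
    ring
  -- abs bounds on the two integrals
  have habs1 : |∫ t in ((a+b)/2)..b, (b-t)^3/6 * f''' t|
      ≤ (1/6) * ∫ t in ((a+b)/2)..b, (b-t)^3 * |f''' t| := by
    calc |∫ t in ((a+b)/2)..b, (b-t)^3/6 * f''' t|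
        ≤ ∫ t in ((a+b)/2)..b, |(b-t)^3/6 * f''' t| :=
          intervalIntegral.abs_integral_le_integral_abs hmb
      _ = ∫ t in ((a+b)/2)..b, (1/6) * ((b-t)^3 * |f''' t|) := by
          apply intervalIntegral.integral_congr
          intro t ht
          rw [Set.uIcc_of_le hmb] at ht
          have h0 : (0:ℝ) ≤ b - t := by linarith [ht.2]
          simp only [abs_mul]
          rw [abs_of_nonneg (by positivity : (0:ℝ) ≤ (b-t)^3/6)]
          ring
      _ = (1/6) * ∫ t in ((a+b)/2)..b, (b-t)^3 * |f''' t| :=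
          intervalIntegral.integral_const_mul _ _
  have habs2 : |∫ t in a..(a+b)/2, (t-a)^3/6 * f''' t|
      ≤ (1/6) * ∫ t in a..(a+b)/2, (t-a)^3 * |f''' t| := by
    calc |∫ t in a..(a+b)/2, (t-a)^3/6 * f''' t|
        ≤ ∫ t in a..(a+b)/2, |(t-a)^3/6 * f''' t| :=
          intervalIntegral.abs_integral_le_integral_abs ham
      _ = ∫ t in a..(a+b)/2, (1/6) * ((t-a)^3 * |f''' t|) := by
          apply intervalIntegral.integral_congr
          intro t ht
          rw [Set.uIcc_of_le ham] at ht
          have h0 : (0:ℝ) ≤ t - a := by linarith [ht.1]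
          simp only [abs_mul]
          rw [abs_of_nonneg (by positivity : (0:ℝ) ≤ (t-a)^3/6)]
          ring
      _ = (1/6) * ∫ t in a..(a+b)/2, (t-a)^3 * |f''' t| :=
          intervalIntegral.integral_const_mul _ _
  -- key lemma hypotheses
  have hKne1 : |f''' a| / |f''' b| ≠ 1 := by
    intro h
    exact hne ((div_eq_one_iff_eq hB.ne').mp h)
  have hKne2 : |f''' b| / |f''' a| ≠ 1 := by
    intro h
    exact hne.symm ((div_eq_one_iff_eq hA.ne').mp h)
  have hmeas := hint.aestronglyMeasurable
  have hφ1 : AEStronglyMeasurable f''' (volume.restrict (Set.Ioc ((a+b)/2) b)) :=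
    hmeas.mono_measure (Measure.restrict_mono
      (Set.Ioc_subset_Icc_self.trans (Set.Icc_subset_Icc ham le_rfl)) le_rfl)
  have hφ2 : AEStronglyMeasurable f''' (volume.restrict (Set.Ioc a ((a+b)/2))) :=
    hmeas.mono_measure (Measure.restrict_mono
      (Set.Ioc_subset_Icc_self.trans (Set.Icc_subset_Icc le_rfl hmb)) le_rfl)
  have hbd1 : ∀ t ∈ Set.Icc ((a+b)/2) b, |f''' t| ^ q ≤
      |f''' b|^q * ((|f''' a|/|f''' b|) ^ (q * ((b-t)/(b-a)))) := by
    intro t ht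
    have hα : (b-t)/(b-a) ∈ Set.Icc (0:ℝ) 1 := by
      constructor
      · apply div_nonneg _ hba.le; linarith [ht.2]
      · rw [div_le_one hba]; linarith [ht.1]
    have h := hlog a (Set.left_mem_Icc.mpr hab.le) b (Set.right_mem_Icc.mpr hab.le) _ hα
    have hpt : (b-t)/(b-a) * a + (1 - (b-t)/(b-a)) * b = t := by
      field_simp
      ring
    rw [hpt] at h
    calc |f''' t| ^ q ≤ (|f''' a|^q)^((b-t)/(b-a)) * (|f''' b|^q)^(1-(b-t)/(b-a)) := h
      _ = |f''' b|^q * ((|f''' a|/|f''' b|) ^ (q * ((b-t)/(b-a)))) :=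
          rpow_convex_form _ _ q _ hA hB
  have hbd2 : ∀ t ∈ Set.Icc a ((a+b)/2), |f''' t| ^ q ≤
      |f''' a|^q * ((|f''' b|/|f''' a|) ^ (q * ((t-a)/(b-a)))) := by
    intro t ht
    have hα : (t-a)/(b-a) ∈ Set.Icc (0:ℝ) 1 := by
      constructor
      · apply div_nonneg _ hba.le; linarith [ht.1]
      · rw [div_le_one hba]; linarith [ht.2]
    have h := hlog b (Set.right_mem_Icc.mpr hab.le) a (Set.left_mem_Icc.mpr hab.le) _ hα
    have hpt : (t-a)/(b-a) * b + (1 - (t-a)/(b-a)) * a = t := by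
      field_simp
      ring
    rw [hpt] at h
    calc |f''' t| ^ q ≤ (|f''' b|^q)^((t-a)/(b-a)) * (|f''' a|^q)^(1-(t-a)/(b-a)) := h
      _ = |f''' a|^q * ((|f''' b|/|f''' a|) ^ (q * ((t-a)/(b-a)))) :=
          rpow_convex_form _ _ q _ hB hA
  have k1 := key_upper f''' a b (|f''' a|) (|f''' b|) q hab hq hA hB hKne1 hφ1 hbd1
  have k2 := key_lower f''' a b (|f''' b|) (|f''' a|) q hab hq hB hA hKne2 hφ2 hbd2
  -- assemble
  have hCint : (∫ x in a..b, (f x - f ((a + b) / 2) - ((b - a) ^ 2 / 24) * f'' ((a + b) / 2)))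
      = (∫ x in a..b, f x) - (b-a) * f ((a+b)/2) - (b-a)^3/24 * f'' ((a+b)/2) := by
    have hfint : IntervalIntegrable f volume a b := hif1.trans hif2
    have e : (fun x => f x - f ((a + b) / 2) - ((b - a) ^ 2 / 24) * f'' ((a + b) / 2))
        = fun x => f x - (f ((a + b) / 2) + ((b - a) ^ 2 / 24) * f'' ((a + b) / 2)) := by
      funext x; ring
    rw [e, intervalIntegral.integral_sub hfint (intervalIntegrable_const),
      intervalIntegral.integral_const, smul_eq_mul]
    ring
  rw [hCint, hE, abs_mul, abs_of_pos (by positivity : (0:ℝ) < 1/(b-a))]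
  have htri := abs_sub (∫ t in ((a+b)/2)..b, (b-t)^3/6 * f''' t)
    (∫ t in a..(a+b)/2, (t-a)^3/6 * f''' t)
  have hb1 : |∫ t in ((a+b)/2)..b, (b-t)^3/6 * f''' t| ≤
      (1/6) * ((b-a)^4/16 * ((1:ℝ)/4) ^ (1-1/q) * (|f''' b| * (muq (|f''' a|/|f''' b|) q) ^ (1/q))) :=
    le_trans habs1 (by linarith)
  have hb2 : |∫ t in a..(a+b)/2, (t-a)^3/6 * f''' t| ≤
      (1/6) * ((b-a)^4/16 * ((1:ℝ)/4) ^ (1-1/q) * (|f''' a| * (muq (|f''' b|/|f''' a|) q) ^ (1/q))) :=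
    le_trans habs2 (by linarith)
  calc (1/(b-a)) * |(∫ t in ((a+b)/2)..b, (b-t)^3/6 * f''' t) - ∫ t in a..(a+b)/2, (t-a)^3/6 * f''' t|
      ≤ (1/(b-a)) * ((1/6) * ((b-a)^4/16 * ((1:ℝ)/4) ^ (1-1/q) * (|f''' b| * (muq (|f''' a|/|f''' b|) q) ^ (1/q)))
        + (1/6) * ((b-a)^4/16 * ((1:ℝ)/4) ^ (1-1/q) * (|f''' a| * (muq (|f''' b|/|f''' a|) q) ^ (1/q)))) := by
        apply mul_le_mul_of_nonneg_left _ (by positivity)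
        linarith
    _ = ((b - a) ^ 3 / 96) * ((1:ℝ) / 4) ^ (1 - 1 / q) *
        (|f''' b| * (muq (|f''' a| / |f''' b|) q) ^ (1 / q)
          + |f''' a| * (muq (|f''' b| / |f''' a|) q) ^ (1 / q)) := by
        field_simp
        ring
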